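/- Let D ⊆ ℂ × ℂ be a nonempty open connected set, let D₁ := Prod.fst '' D and D₂ := Prod.snd '' D, and for an index type S let (g_s : D₁ → ℂ) and (h_s : D₂ → ℂ) be families of holomorphic functions; define F_s : D → ℂ × ℂ by F_s(w₁, w₂) = (g_s(w₁), h_s(w₂)). Then the family {F_s} is locally uniformly bounded on D if and only if {g_s} is locally uniformly bounded on D₁ and {h_s} is locally uniformly bounded on D₂. -/

import Mathlib

lemma aux_fst (D : Set (ℂ × ℂ)) (hD : IsOpen D) (K₁ : Set ℂ)
    (hsub : K₁ ⊆ Prod.fst '' D) (hc : IsCompact K₁) :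
    ∃ K : Set (ℂ × ℂ), K ⊆ D ∧ IsCompact K ∧ ∀ z ∈ K₁, ∃ w, (z, w) ∈ K := by
  have hch : ∀ z : K₁, ∃ p : ℂ × ℂ, p ∈ D ∧ p.1 = (z : ℂ) := fun z => hsub z.2
  choose q hqD hq1 using hch
  have hr : ∀ z : K₁, ∃ r : ℝ, 0 < r ∧ Metric.closedBall (q z) r ⊆ D := by
    intro z
    rcases Metric.isOpen_iff.mp hD (q z) (hqD z) with ⟨ε, hε, hball⟩
    exact ⟨ε / 2, by linarith, (Metric.closedBall_subset_ball (by linarith)).trans hball⟩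
  choose r hrpos hrsub using hr
  have hcov : K₁ ⊆ ⋃ i : K₁, Metric.ball ((q i).1) (r i) := by
    intro z hz
    exact Set.mem_iUnion.mpr ⟨⟨z, hz⟩, by
      simp [Metric.mem_ball, hq1 ⟨z, hz⟩, hrpos ⟨z, hz⟩]⟩
  rcases hc.elim_finite_subcover _ (fun i => Metric.isOpen_ball) hcov with ⟨t, ht⟩
  refine ⟨⋃ i ∈ t, Metric.closedBall (q i) (r i), ?_, ?_, ?_⟩
  · exact Set.iUnion₂_subset fun i _ => hrsub i
  · exact t.finite_toSet.isCompact_biUnion fun i _ => isCompact_closedBall _ _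
  · intro z hz
    rcases Set.mem_iUnion₂.mp (ht hz) with ⟨i, hit, hiz⟩
    refine ⟨(q i).2, Set.mem_iUnion₂.mpr ⟨i, hit, ?_⟩⟩
    rw [Metric.mem_closedBall, Prod.dist_eq]
    simp only [dist_self]
    exact max_le (le_of_lt (Metric.mem_ball.mp hiz)) (le_of_lt (hrpos i))

lemma aux_snd (D : Set (ℂ × ℂ)) (hD : IsOpen D) (K₂ : Set ℂ)
    (hsub : K₂ ⊆ Prod.snd '' D) (hc : IsCompact K₂) :
    ∃ K : Set (ℂ × ℂ), K ⊆ D ∧ IsCompact K ∧ ∀ z ∈ K₂, ∃ w, (w, z) ∈ K := by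
  have hsub' : K₂ ⊆ Prod.fst '' (Prod.swap '' D) := by
    rw [Set.image_image]; exact hsub
  have hopen : IsOpen (Prod.swap '' D) := by
    rw [Set.image_swap_eq_preimage_swap]; exact hD.preimage continuous_swap
  rcases aux_fst (Prod.swap '' D) hopen K₂ hsub' hc with ⟨K, hKD, hKc, hcov⟩
  · refine ⟨Prod.swap '' K, ?_, hKc.image continuous_swap, ?_⟩
    · intro p hp
      rcases hp with ⟨q, hq, rfl⟩
      rcases hKD hq with ⟨d, hd, rfl⟩
      simpa using hd
    · intro z hz
      rcases hcov z hz with ⟨w, hw⟩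
      exact ⟨w, ⟨(z, w), hw, rfl⟩⟩

theorem stmt6 {S : Type*} (D : Set (ℂ × ℂ)) (hD : IsOpen D) (hconn : IsConnected D)
    (g h : S → ℂ → ℂ)
    (hg : ∀ s, DifferentiableOn ℂ (g s) (Prod.fst '' D))
    (hh : ∀ s, DifferentiableOn ℂ (h s) (Prod.snd '' D)) :
    (∀ K : Set (ℂ × ℂ), K ⊆ D → IsCompact K →
        ∃ M : ℝ, ∀ s : S, ∀ w ∈ K, ‖(g s w.1, h s w.2)‖ ≤ M) ↔
      ((∀ K₁ : Set ℂ, K₁ ⊆ Prod.fst '' D → IsCompact K₁ →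
          ∃ M₁ : ℝ, ∀ s : S, ∀ z ∈ K₁, ‖g s z‖ ≤ M₁) ∧
       (∀ K₂ : Set ℂ, K₂ ⊆ Prod.snd '' D → IsCompact K₂ →
          ∃ M₂ : ℝ, ∀ s : S, ∀ z ∈ K₂, ‖h s z‖ ≤ M₂)) := by
  constructor
  · intro hbd
    constructor
    · intro K₁ hsub hc
      rcases aux_fst D hD K₁ hsub hc with ⟨K, hKD, hKc, hcov⟩
      rcases hbd K hKD hKc with ⟨M, hM⟩
      refine ⟨M, fun s z hz => ?_⟩
      rcases hcov z hz with ⟨w, hw⟩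
      exact (norm_fst_le (g s z, h s w)).trans (hM s (z, w) hw)
    · intro K₂ hsub hc
      rcases aux_snd D hD K₂ hsub hc with ⟨K, hKD, hKc, hcov⟩
      rcases hbd K hKD hKc with ⟨M, hM⟩
      refine ⟨M, fun s z hz => ?_⟩
      rcases hcov z hz with ⟨w, hw⟩
      exact (norm_snd_le (g s w, h s z)).trans (hM s (w, z) hw)
  · rintro ⟨H1, H2⟩ K hKD hKc
    rcases H1 (Prod.fst '' K) (Set.image_mono hKD) (hKc.image continuous_fst)
      with ⟨M₁, hM₁⟩
    rcases H2 (Prod.snd '' K) (Set.image_mono hKD) (hKc.image continuous_snd)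
      with ⟨M₂, hM₂⟩
    refine ⟨max M₁ M₂, fun s w hw => ?_⟩
    rw [Prod.norm_def]
    exact max_le_max (hM₁ s w.1 ⟨w, hw, rfl⟩) (hM₂ s w.2 ⟨w, hw, rfl⟩)
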